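/- There is no real symmetric orthogonal 9×9 matrix M whose off-diagonal zero pattern matches the adjacency matrix of the circulant-like graph R_{9,1}, whose edge set is the union of the 9-cycle (1,2,...,9,1) and the three triangles (1,4,7), (2,5,8), (3,6,9). Equivalently, q(R_{9,1}) > 2. -/

import Mathlib

open Matrix

private theorem sum_zmod9' (f : ZMod 9 → ℝ) :
    ∑ k, f k = f 0 + f 1 + f 2 + f 3 + f 4 + f 5 + f 6 + f 7 + f 8 := by
  have huniv : (Finset.univ : Finset (ZMod 9)) = {0,1,2,3,4,5,6,7,8} := by decide
  rw [huniv]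
  rw [Finset.sum_insert (by decide), Finset.sum_insert (by decide),
    Finset.sum_insert (by decide), Finset.sum_insert (by decide),
    Finset.sum_insert (by decide), Finset.sum_insert (by decide),
    Finset.sum_insert (by decide), Finset.sum_insert (by decide),
    Finset.sum_singleton]
  ring

/-- There is no real symmetric orthogonal `9 × 9` matrix whose
off-diagonal zero pattern matches the adjacency of the graph `R_{9,1}`, i.e. the
graph on `ℤ/9ℤ` whose edges are the 9-cycle (differences `±1`) together with the
three triangles `(1,4,7)`, `(2,5,8)`, `(3,6,9)` (differences `±3`).
Equivalently, `q(R_{9,1}) > 2`. -/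
theorem stmt_8 :
    ¬ ∃ M : Matrix (ZMod 9) (ZMod 9) ℝ, M.IsSymm ∧ M * M = 1 ∧
      (∀ u v : ZMod 9, u ≠ v →
        (M u v ≠ 0 ↔ (u - v = 1 ∨ u - v = -1 ∨ u - v = 3 ∨ u - v = -3))) := by
  rintro ⟨M, _, horth, hpat⟩
  -- zero pattern
  have hz : ∀ u v : ZMod 9, u ≠ v →
      ¬(u - v = 1 ∨ u - v = -1 ∨ u - v = 3 ∨ u - v = -3) → M u v = 0 := by
    intro u v h1 h2
    by_contra h
    exact h2 ((hpat u v h1).mp h)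
  -- orthogonality of distinct rows, expanded
  have key : ∀ u v : ZMod 9, u ≠ v →
      M u 0 * M 0 v + M u 1 * M 1 v + M u 2 * M 2 v + M u 3 * M 3 v +
      M u 4 * M 4 v + M u 5 * M 5 v + M u 6 * M 6 v + M u 7 * M 7 v +
      M u 8 * M 8 v = 0 := by
    intro u v huv
    have h := congrFun (congrFun horth u) v
    rw [Matrix.mul_apply] at h
    have hs := sum_zmod9' (fun k => M u k * M k v)
    rw [hs, Matrix.one_apply_ne huv] at h
    exact h
  have e01 := key 0 1 (by decide)
  have e12 := key 1 2 (by decide)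
  have e23 := key 2 3 (by decide)
  have e03 := key 0 3 (by decide)
  -- zero entries
  rw [hz 0 2 (by decide) (by decide), hz 3 1 (by decide) (by decide),
    hz 0 4 (by decide) (by decide), hz 0 5 (by decide) (by decide),
    hz 6 1 (by decide) (by decide), hz 0 7 (by decide) (by decide),
    hz 8 1 (by decide) (by decide)] at e01
  rw [hz 0 2 (by decide) (by decide), hz 1 3 (by decide) (by decide),
    hz 4 2 (by decide) (by decide), hz 1 5 (by decide) (by decide),
    hz 1 6 (by decide) (by decide), hz 7 2 (by decide) (by decide),
    hz 1 8 (by decide) (by decide)] at e12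
  rw [hz 2 0 (by decide) (by decide), hz 1 3 (by decide) (by decide),
    hz 2 4 (by decide) (by decide), hz 5 3 (by decide) (by decide),
    hz 2 6 (by decide) (by decide), hz 2 7 (by decide) (by decide),
    hz 8 3 (by decide) (by decide)] at e23
  rw [hz 1 3 (by decide) (by decide), hz 0 2 (by decide) (by decide),
    hz 0 4 (by decide) (by decide), hz 0 5 (by decide) (by decide),
    hz 0 7 (by decide) (by decide), hz 8 3 (by decide) (by decide)] at e03
  -- nonzero entries
  have n01 : M 0 1 ≠ 0 := (hpat 0 1 (by decide)).mpr (by decide)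
  have n12 : M 1 2 ≠ 0 := (hpat 1 2 (by decide)).mpr (by decide)
  have n23 : M 2 3 ≠ 0 := (hpat 2 3 (by decide)).mpr (by decide)
  have n06 : M 0 6 ≠ 0 := (hpat 0 6 (by decide)).mpr (by decide)
  have n63 : M 6 3 ≠ 0 := (hpat 6 3 (by decide)).mpr (by decide)
  -- diagonal relations
  have d01 : M 0 0 + M 1 1 = 0 := by
    have h : M 0 1 * (M 0 0 + M 1 1) = 0 := by ring_nf; ring_nf at e01; linarith
    exact (mul_eq_zero.mp h).resolve_left n01
  have d12 : M 1 1 + M 2 2 = 0 := by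
    have h : M 1 2 * (M 1 1 + M 2 2) = 0 := by ring_nf; ring_nf at e12; linarith
    exact (mul_eq_zero.mp h).resolve_left n12
  have d23 : M 2 2 + M 3 3 = 0 := by
    have h : M 2 3 * (M 2 2 + M 3 3) = 0 := by ring_nf; ring_nf at e23; linarith
    exact (mul_eq_zero.mp h).resolve_left n23
  -- final contradiction
  have h63 : M 0 6 * M 6 3 = 0 := by
    have h03 : M 0 0 + M 3 3 = 0 := by linarith
    have h : M 0 3 * (M 0 0 + M 3 3) + M 0 6 * M 6 3 = 0 := by
      ring_nf; ring_nf at e03; linarith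
    rw [h03, mul_zero, zero_add] at h
    exact h
  exact mul_ne_zero n06 n63 h63
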